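/- The approximation analysis of Mechanism 3 for the maximum cost is tight: for n = 2 and any d > 0, the profile x = (−d, d) satisfies MC(x, f₃(x)) = d, while the feasible range (−d/2, d/2) achieves MC(x, −d/2, d/2) = d/2 and minimizes the maximum cost over all feasible ranges; hence MC(x, f₃(x)) = 2 · OPT_MC(x), where f₃ denotes Mechanism 3. -/
import Mathlib


open MeasureTheory

noncomputable section

/-- Shrink map: collapse interval [a,b] to the point a. -/
def shrink (a b t : ℝ) : ℝ :=
  if t ≤ a then t else if t ≤ b then a else t - (b - a)

/-- Cost of an agent at ideal location `t` under range `(a,b)`. -/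
def cost (t a b : ℝ) : ℝ := |shrink a b t - shrink a b 0|

/-- Social cost. -/
def SC (n : ℕ) (x : Fin n → ℝ) (a b : ℝ) : ℝ := ∑ i, cost (x i) a b

/-- Maximum cost. -/
def MC (n : ℕ) (x : Fin n → ℝ) (a b : ℝ) : ℝ :=
  sSup (Set.range fun i => cost (x i) a b)

/-- Optimal social cost over feasible ranges. -/
def OPTSC (n : ℕ) (d : ℝ) (x : Fin n → ℝ) : ℝ :=
  sInf {v : ℝ | ∃ a b : ℝ, a ≤ b ∧ b - a ≤ d ∧ v = SC n x a b}

/-- Optimal maximum cost over feasible ranges. -/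
def OPTMC (n : ℕ) (d : ℝ) (x : Fin n → ℝ) : ℝ :=
  sInf {v : ℝ | ∃ a b : ℝ, a ≤ b ∧ b - a ≤ d ∧ v = MC n x a b}

open Classical in
/-- The set D(x) used by Mechanism 1. -/
def Dset (n : ℕ) (d : ℝ) (x : Fin n → ℝ) : Set ℝ :=
  {y : ℝ | (Finset.univ.filter fun i => y + d ≤ x i).card ≤
           (Finset.univ.filter fun i => x i ≤ y).card}

/-- Mechanism 1. -/
def mech1 (n : ℕ) (d : ℝ) (x : Fin n → ℝ) : ℝ × ℝ :=
  if 0 ≤ sInf (Dset n d x) then (0, d)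
  else if sInf (Dset n d x) ≤ -d then (-d, 0)
  else (sInf (Dset n d x), sInf (Dset n d x) + d)

/-- Leftmost agent location. -/
def xleft (n : ℕ) (x : Fin n → ℝ) : ℝ := sInf (Set.range x)

/-- Rightmost agent location. -/
def xright (n : ℕ) (x : Fin n → ℝ) : ℝ := sSup (Set.range x)

/-- Mechanism 2. -/
def mech2 (n : ℕ) (d : ℝ) (x : Fin n → ℝ) : ℝ × ℝ :=
  if 0 ≤ xleft n x then (0, d)
  else if xleft n x ≤ -d then (-d, 0)
  else (xleft n x, xleft n x + d)

/-- Mechanism 3. -/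
def mech3 (n : ℕ) (d : ℝ) (x : Fin n → ℝ) : ℝ × ℝ :=
  (min (xleft n x) 0, min (xleft n x) 0 + d)

/-- The profile where agents in `S` report `x'` and all others report `x`. -/
def misreport (n : ℕ) (S : Finset (Fin n)) (x x' : Fin n → ℝ) : Fin n → ℝ :=
  fun j => if j ∈ S then x' j else x j


lemma MC_two (x : Fin 2 → ℝ) (a b : ℝ) :
    MC 2 x a b = max (cost (x 0) a b) (cost (x 1) a b) := by
  unfold MC
  have h : (Set.range fun i : Fin 2 => cost (x i) a b)
      = {cost (x 0) a b, cost (x 1) a b} := by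
    ext v
    simp [Fin.exists_fin_two, eq_comm]
  rw [h, csSup_pair]

lemma xleft_two (d : ℝ) (hd : 0 < d) : xleft 2 ![-d, d] = -d := by
  unfold xleft
  have h : Set.range ![-d, d] = {-d, d} := by
    ext v; simp [Fin.exists_fin_two, eq_comm]; tauto
  rw [h]
  have := csInf_pair (-d) d
  rw [this]
  simp [min_eq_left]
  linarith

theorem stmt14 (d : ℝ) (hd : 0 < d) :
    MC 2 ![-d, d] (mech3 2 d ![-d, d]).1 (mech3 2 d ![-d, d]).2 = d ∧
    MC 2 ![-d, d] (-(d / 2)) (d / 2) = d / 2 ∧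
    (∀ a b : ℝ, a ≤ b → b - a ≤ d → MC 2 ![-d, d] (-(d / 2)) (d / 2) ≤ MC 2 ![-d, d] a b) ∧
    MC 2 ![-d, d] (mech3 2 d ![-d, d]).1 (mech3 2 d ![-d, d]).2 = 2 * OPTMC 2 d ![-d, d] := by
  have hx0 : (![-d, d] : Fin 2 → ℝ) 0 = -d := rfl
  have hx1 : (![-d, d] : Fin 2 → ℝ) 1 = d := rfl
  have hm3 : mech3 2 d ![-d, d] = (-d, 0) := by
    unfold mech3
    rw [xleft_two d hd]
    have : min (-d) 0 = -d := min_eq_left (by linarith)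
    rw [this]
    norm_num
  have hMC1 : MC 2 ![-d, d] (mech3 2 d ![-d, d]).1 (mech3 2 d ![-d, d]).2 = d := by
    rw [hm3]
    rw [MC_two, hx0, hx1]
    unfold cost shrink
    split_ifs <;> simp_all <;> [skip; skip; skip] <;> try linarith
  have hMC2 : MC 2 ![-d, d] (-(d / 2)) (d / 2) = d / 2 := by
    rw [MC_two, hx0, hx1]
    unfold cost shrink
    split_ifs <;> try linarith
    all_goals
      rw [show |(-d - -(d/2))| = d/2 by rw [abs_of_nonpos] <;> linarith,
        show |(d - (d/2 - -(d/2)) - -(d/2))| = d/2 by rw [abs_of_nonneg] <;> linarith]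
    exact max_self _
  have hlb : ∀ a b : ℝ, a ≤ b → b - a ≤ d → d / 2 ≤ MC 2 ![-d, d] a b := by
    intro a b hab hba
    rw [MC_two, hx0, hx1]
    have key : shrink a b d - shrink a b (-d) ≥ d := by
      unfold shrink
      split_ifs <;> linarith
    have mono1 : shrink a b (-d) ≤ shrink a b 0 := by
      unfold shrink; split_ifs <;> linarith
    have mono2 : shrink a b 0 ≤ shrink a b d := by
      unfold shrink; split_ifs <;> linarith
    unfold cost
    rw [abs_of_nonpos (by linarith), abs_of_nonneg (by linarith)]
    rcases le_total (shrink a b 0 - shrink a b (-d)) (shrink a b d - shrink a b 0) with h | h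
    · exact le_max_of_le_right (by linarith)
    · exact le_max_of_le_left (by linarith)
  have hOPT : OPTMC 2 d ![-d, d] = d / 2 := by
    unfold OPTMC
    apply le_antisymm
    · apply csInf_le
      · exact ⟨d / 2, by rintro v ⟨a, b, hab, hba, rfl⟩; exact hlb a b hab hba⟩
      · show ∃ a b : ℝ, a ≤ b ∧ b - a ≤ d ∧ d / 2 = MC 2 ![-d, d] a b
        exact ⟨-(d/2), d/2, by linarith, by linarith, hMC2.symm⟩
    · have hne : Set.Nonempty {v : ℝ | ∃ a b : ℝ, a ≤ b ∧ b - a ≤ d ∧ v = MC 2 ![-d, d] a b} :=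
        ⟨d / 2, -(d/2), d/2, by linarith, by linarith, hMC2.symm⟩
      apply le_csInf hne
      rintro v ⟨a, b, hab, hba, rfl⟩
      exact hlb a b hab hba
  refine ⟨hMC1, hMC2, fun a b hab hba => by rw [hMC2]; exact hlb a b hab hba, ?_⟩
  rw [hMC1, hOPT]; ring
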